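/- Let s_min > 0, let L ≥ 1, and let R be an L×L Hermitian matrix with R ≥ s_min I_L. Then for every L×L complex matrix A, the unique solution X = D_R(A) of R X R^{1/2} + R^{1/2} X R = A satisfies Tr( D_R(A) D_R(A)^H ) ≤ (1 / (4 s_min³)) · Tr( A A^H ). -/

import Mathlib

open Matrix
open scoped ComplexOrder

/-- The positive semidefinite square root of a positive semidefinite matrix
(the definition `Matrix.PosSemidef.sqrt` of the older Mathlib, since removed). -/
noncomputable def Matrix.PosSemidef.sqrt {n : Type*} {𝕜 : Type*} [Fintype n] [RCLike 𝕜]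
    [DecidableEq n] {A : Matrix n n 𝕜} (hA : A.PosSemidef) : Matrix n n 𝕜 :=
  hA.1.eigenvectorUnitary.1 * diagonal ((↑) ∘ (√·) ∘ hA.1.eigenvalues) *
    (star hA.1.eigenvectorUnitary : Matrix n n 𝕜)

lemma trace_mul_conjTranspose_re {n : ℕ} (M : Matrix (Fin n) (Fin n) ℂ) :
    ((M * Mᴴ).trace).re = ∑ i, ∑ j, Complex.normSq (M i j) := by
  simp only [Matrix.trace, Matrix.diag_apply, Matrix.mul_apply, Matrix.conjTranspose_apply,
    RCLike.star_def, Complex.mul_conj]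
  rw [Complex.re_sum]
  refine Finset.sum_congr rfl fun i _ => ?_
  rw [Complex.re_sum]
  simp

lemma trace_conj_unitary {n : ℕ} (U M : Matrix (Fin n) (Fin n) ℂ) (h : Uᴴ * U = 1) :
    ((U * M * Uᴴ) * (U * M * Uᴴ)ᴴ).trace = (M * Mᴴ).trace := by
  have h2 : (U * M * Uᴴ) * (U * M * Uᴴ)ᴴ = U * (M * Mᴴ) * Uᴴ := by
    simp only [Matrix.conjTranspose_mul, Matrix.conjTranspose_conjTranspose]
    calc U * M * Uᴴ * (U * (Mᴴ * Uᴴ)) = U * M * (Uᴴ * U) * (Mᴴ * Uᴴ) := by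
          noncomm_ring
      _ = U * (M * Mᴴ) * Uᴴ := by rw [h]; noncomm_ring
  rw [h2, Matrix.trace_mul_cycle, ← Matrix.mul_assoc, h, Matrix.one_mul]

lemma conj_sandwich {n : ℕ} (U D D' X : Matrix (Fin n) (Fin n) ℂ) (h : Uᴴ * U = 1) :
    Uᴴ * ((U * D * Uᴴ) * X * (U * D' * Uᴴ)) * U = D * (Uᴴ * X * U) * D' := by
  calc Uᴴ * ((U * D * Uᴴ) * X * (U * D' * Uᴴ)) * U
      = (Uᴴ * U) * D * (Uᴴ * X * U) * D' * (Uᴴ * U) := by noncomm_ring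
    _ = D * (Uᴴ * X * U) * D' := by rw [h]; noncomm_ring

/-- Frobenius-type bound for the operator `D_R`, the unique
solution of `R X R^{1/2} + R^{1/2} X R = A`, when `R ≥ s_min I`. -/
theorem sylvester_sqrt_frobenius_bound (s_min : ℝ) (h0 : 0 < s_min)
    (L : ℕ) (hL : 1 ≤ L)
    (R : Matrix (Fin L) (Fin L) ℂ) (hR : R.PosSemidef)
    (hlow : (R - (s_min : ℂ) • 1).PosSemidef)
    (A X : Matrix (Fin L) (Fin L) ℂ)
    (hX : R * X * hR.sqrt + hR.sqrt * X * R = A) :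
    ((X * Xᴴ).trace).re ≤ 1 / (4 * s_min ^ 3) * ((A * Aᴴ).trace).re := by
  classical
  set H := hR.1 with hH
  set U : Matrix (Fin L) (Fin L) ℂ := (H.eigenvectorUnitary : Matrix (Fin L) (Fin L) ℂ) with hU
  set lam := H.eigenvalues with hlamdef
  -- eigenvalue lower bound
  have hlam : ∀ i, s_min ≤ lam i := by
    intro i
    have hnn := hlow.re_dotProduct_nonneg ⇑(H.eigenvectorBasis i)
    have hv := H.mulVec_eigenvectorBasis i
    rw [Matrix.sub_mulVec, dotProduct_sub, hv] at hnn
    rw [Matrix.smul_mulVec, Matrix.one_mulVec] at hnn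
    simp only [dotProduct_smul] at hnn
    have hvv : (star ⇑(H.eigenvectorBasis i)) ⬝ᵥ ⇑(H.eigenvectorBasis i)
        = (1 : ℂ) := by
      rw [dotProduct_comm, ← EuclideanSpace.inner_eq_star_dotProduct, inner_self_eq_norm_sq_to_K,
        H.eigenvectorBasis.orthonormal.1 i]
      norm_num
    rw [hvv] at hnn
    simp at hnn
    exact hnn
  have hUU : Uᴴ * U = 1 := by
    rw [← Matrix.star_eq_conjTranspose]
    exact Unitary.coe_star_mul_self H.eigenvectorUnitary
  have hUU' : U * Uᴴ = 1 := by
    rw [← Matrix.star_eq_conjTranspose]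
    exact Unitary.coe_mul_star_self H.eigenvectorUnitary
  set D : Matrix (Fin L) (Fin L) ℂ := diagonal (fun i => (lam i : ℂ)) with hD
  set D' : Matrix (Fin L) (Fin L) ℂ :=
    diagonal (fun i => ((Real.sqrt (lam i) : ℝ) : ℂ)) with hD'
  have hspec : R = U * D * Uᴴ := by
    have := H.spectral_theorem
    rw [this]; rfl
  have hsqrt : hR.sqrt = U * D' * Uᴴ := rfl
  have h1 : Uᴴ * (R * X * hR.sqrt) * U = D * (Uᴴ * X * U) * D' := by
    have h := conj_sandwich U D D' X hUU
    rw [← hspec, ← hsqrt] at h; exact h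
  have h2 : Uᴴ * (hR.sqrt * X * R) * U = D' * (Uᴴ * X * U) * D := by
    have h := conj_sandwich U D' D X hUU
    rw [← hspec, ← hsqrt] at h; exact h
  have key : D * (Uᴴ * X * U) * D' + D' * (Uᴴ * X * U) * D = Uᴴ * A * U := by
    rw [← hX, Matrix.mul_add, Matrix.add_mul, h1, h2]
  set Y : Matrix (Fin L) (Fin L) ℂ := Uᴴ * X * U with hY
  set B : Matrix (Fin L) (Fin L) ℂ := Uᴴ * A * U with hB
  have entry : ∀ i j, ((lam i : ℂ) * (Real.sqrt (lam j) : ℝ)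
      + ((Real.sqrt (lam i) : ℝ) : ℂ) * (lam j : ℂ)) * Y i j = B i j := by
    intro i j
    have h := congrFun (congrFun key i) j
    simp only [Matrix.add_apply, Matrix.mul_diagonal, Matrix.diagonal_mul, hD, hD'] at h
    rw [← h]; ring
  have hXid : X = U * Y * Uᴴ := by
    calc X = 1 * X * 1 := by noncomm_ring
      _ = (U * Uᴴ) * X * (U * Uᴴ) := by rw [hUU']
      _ = U * Y * Uᴴ := by rw [hY]; noncomm_ring
  have hAid : A = U * B * Uᴴ := by
    calc A = 1 * A * 1 := by noncomm_ring
      _ = (U * Uᴴ) * A * (U * Uᴴ) := by rw [hUU']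
      _ = U * B * Uᴴ := by rw [hB]; noncomm_ring
  have trX : ((X * Xᴴ).trace).re = ∑ i, ∑ j, Complex.normSq (Y i j) := by
    conv_lhs => rw [hXid]
    rw [trace_conj_unitary U Y hUU, trace_mul_conjTranspose_re]
  have trA : ((A * Aᴴ).trace).re = ∑ i, ∑ j, Complex.normSq (B i j) := by
    conv_lhs => rw [hAid]
    rw [trace_conj_unitary U B hUU, trace_mul_conjTranspose_re]
  rw [trX, trA, Finset.mul_sum]
  refine Finset.sum_le_sum fun i _ => ?_
  rw [Finset.mul_sum]
  refine Finset.sum_le_sum fun j _ => ?_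
  have hBij : Complex.normSq (B i j)
      = (lam i * Real.sqrt (lam j) + Real.sqrt (lam i) * lam j) ^ 2
        * Complex.normSq (Y i j) := by
    rw [← entry i j]
    rw [Complex.normSq_mul]
    congr 1
    rw [show ((lam i : ℂ) * ((Real.sqrt (lam j) : ℝ) : ℂ)
        + ((Real.sqrt (lam i) : ℝ) : ℂ) * (lam j : ℂ))
        = (((lam i * Real.sqrt (lam j) + Real.sqrt (lam i) * lam j : ℝ)) : ℂ) by push_cast; ring]
    rw [Complex.normSq_ofReal, sq]
  rw [hBij]
  have hi := hlam i
  have hj := hlam j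
  have hsi : Real.sqrt s_min ≤ Real.sqrt (lam i) := Real.sqrt_le_sqrt hi
  have hsj : Real.sqrt s_min ≤ Real.sqrt (lam j) := Real.sqrt_le_sqrt hj
  have hss : 0 < Real.sqrt s_min := Real.sqrt_pos.mpr h0
  have hmulself : Real.sqrt s_min * Real.sqrt s_min = s_min := Real.mul_self_sqrt h0.le
  have hnsq : 0 ≤ Complex.normSq (Y i j) := Complex.normSq_nonneg _
  have hmu : 2 * (s_min * Real.sqrt s_min)
      ≤ lam i * Real.sqrt (lam j) + Real.sqrt (lam i) * lam j := by
    nlinarith [Real.sqrt_nonneg (lam i), Real.sqrt_nonneg (lam j)]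
  have hmu2 : 4 * s_min ^ 3
      ≤ (lam i * Real.sqrt (lam j) + Real.sqrt (lam i) * lam j) ^ 2 := by
    have hc : (0:ℝ) ≤ 2 * (s_min * Real.sqrt s_min) := by positivity
    have hsq := mul_self_le_mul_self hc hmu
    nlinarith [hsq, hmulself, h0.le]
  have h4 : 0 < 4 * s_min ^ 3 := by positivity
  rw [div_mul_eq_mul_div, one_mul, le_div_iff₀ h4]
  nlinarith
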